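/- In the hitting-set reduction database I, if a path concept ∃r.∃w.A with w ∈ (r + ss)* fits {a}, {b}, then the set H = {i | the i-th block of w is ss} is a hitting set for S = {S₁, …, S_m}, and the size of the concept is n + |H| + 2. -/

import Mathlib

structure DB (CN RN Ind : Type) where
  concFact : CN → Ind → Prop
  roleFact : RN → Ind → Ind → Prop
  adom : Set Ind

def DB.succ {CN RN Ind : Type} (I : DB CN RN Ind) (r : RN) (a : Ind) : Set Ind :=
  {b | I.roleFact r a b}

def IsALCQBisim {CN RN Ind : Type} (I : DB CN RN Ind) (S : Ind → Ind → Prop) : Prop :=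
  (∀ a b, S a b → a ∈ I.adom ∧ b ∈ I.adom) ∧
  ∀ a b, S a b →
    (∀ A, I.concFact A a ↔ I.concFact A b) ∧
    (∀ r, ∀ D ⊆ I.succ r a, ∃ E ⊆ I.succ r b, ∃ f : Ind → Ind,
        Set.BijOn f D E ∧ ∀ d ∈ D, S d (f d)) ∧
    (∀ r, ∀ E ⊆ I.succ r b, ∃ D ⊆ I.succ r a, ∃ f : Ind → Ind,
        Set.BijOn f D E ∧ ∀ d ∈ D, S d (f d))

/-- Individuals of the hitting-set reduction database: roots `a`, `b`, the
`a`-path nodes `aᵢ` with detour nodes `aᵢ'`, and for each `j` the `b_j`-path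
nodes `b_{j,i}` with detour nodes `b_{j,i}'`. -/
inductive HInd (m n : ℕ) : Type where
  | rootA : HInd m n
  | rootB : HInd m n
  | an (i : Fin (n + 1)) : HInd m n
  | ap (i : Fin n) : HInd m n
  | bn (j : Fin m) (i : Fin (n + 1)) : HInd m n
  | bp (j : Fin m) (i : Fin n) : HInd m n

/-- The hitting-set reduction database for sets `S j ⊆ {1,…,n}` (a position
`i : Fin n` represents the number `i+1`). Role `true` is `r`, role `false`
is `s`; the single concept name `A` holds at the final path nodes. The `b_j`-path
has the `s`-detour at position `i` exactly when `i ∉ S j`. -/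
def hitDB (m n : ℕ) (S : Fin m → Finset (Fin n)) : DB Unit Bool (HInd m n) where
  concFact := fun _ x => x = .an (Fin.last n) ∨ ∃ j, x = .bn j (Fin.last n)
  roleFact := fun rr x y =>
    if rr then
      (x = .rootA ∧ (y = HInd.an 0 ∨ ∃ j, y = HInd.bn j 0)) ∨
      (x = .rootB ∧ ∃ j, y = HInd.bn j 0) ∨
      (∃ i : Fin n, x = HInd.an i.castSucc ∧ y = HInd.an i.succ) ∨
      (∃ (j : Fin m) (i : Fin n), x = HInd.bn j i.castSucc ∧ y = HInd.bn j i.succ)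
    else
      (∃ i : Fin n, x = HInd.an i.castSucc ∧ y = HInd.ap i) ∨
      (∃ i : Fin n, x = HInd.ap i ∧ y = HInd.an i.succ) ∨
      (∃ (j : Fin m) (i : Fin n), i ∉ S j ∧
        ((x = HInd.bn j i.castSucc ∧ y = HInd.bp j i) ∨
         (x = HInd.bp j i ∧ y = HInd.bn j i.succ)))
  adom := Set.univ

/-- Path concepts: `A` and `∃w.C` for `w` a role name. -/
inductive PC (CN RN : Type) : Type where
  | atom (A : CN) : PC CN RN
  | ex (r : RN) (C : PC CN RN) : PC CN RN

def PC.sem {CN RN Ind : Type} (I : DB CN RN Ind) : PC CN RN → Set Ind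
  | .atom A => {a ∈ I.adom | I.concFact A a}
  | .ex r C => {a ∈ I.adom | ∃ b ∈ I.succ r a, b ∈ C.sem I}

def PC.size {CN RN : Type} : PC CN RN → ℕ
  | .atom _ => 1
  | .ex _ C => 1 + C.size

/-- `Cpath n H i` is the concept `C_i`: `C_0 = A`, and `C_i = ∃s.∃s.C_{i-1}` if
position `n−i+1` belongs to `H` (i.e. the Fin-index `n−i` is in `H`),
`C_i = ∃r.C_{i-1}` otherwise. -/
def Cpath (n : ℕ) (H : Finset (Fin n)) : ℕ → PC Unit Bool
  | 0 => .atom ()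
  | (i + 1) =>
      if h : n - (i + 1) < n then
        if (⟨n - (i + 1), h⟩ : Fin n) ∈ H then
          .ex false (.ex false (Cpath n H i))
        else .ex true (Cpath n H i)
      else .ex true (Cpath n H i)


lemma hit_role_s (m n : ℕ) (S : Fin m → Finset (Fin n)) {x y : HInd m n}
    (hx : (∃ i : Fin n, x = HInd.an i.castSucc ∧ y = HInd.ap i) ∨
      (∃ i : Fin n, x = HInd.ap i ∧ y = HInd.an i.succ) ∨
      (∃ (j : Fin m) (i : Fin n), i ∉ S j ∧
        ((x = HInd.bn j i.castSucc ∧ y = HInd.bp j i) ∨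
         (x = HInd.bp j i ∧ y = HInd.bn j i.succ)))) :
    (hitDB m n S).roleFact false x y := by
  unfold hitDB
  dsimp only
  rw [if_neg (by simp)]
  exact hx

lemma hit_role_r (m n : ℕ) (S : Fin m → Finset (Fin n)) {x y : HInd m n}
    (hx : (x = .rootA ∧ (y = HInd.an 0 ∨ ∃ j, y = HInd.bn j 0)) ∨
      (x = .rootB ∧ ∃ j, y = HInd.bn j 0) ∨
      (∃ i : Fin n, x = HInd.an i.castSucc ∧ y = HInd.an i.succ) ∨
      (∃ (j : Fin m) (i : Fin n), x = HInd.bn j i.castSucc ∧ y = HInd.bn j i.succ)) :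
    (hitDB m n S).roleFact true x y := by
  unfold hitDB
  dsimp only
  rw [if_pos rfl]
  exact hx

lemma hit_mem_path (m n : ℕ) (S : Fin m → Finset (Fin n)) (H : Finset (Fin n))
    (j : Fin m) (hdis : ∀ x ∈ H, x ∉ S j) :
    ∀ i, (hi : i ≤ n) →
      HInd.bn j ⟨n - i, by omega⟩ ∈ (Cpath n H i).sem (hitDB m n S) := by
  intro i
  induction i with
  | zero =>
      intro _
      exact ⟨Set.mem_univ _, Or.inr ⟨j, rfl⟩⟩
  | succ i ih =>
      intro hi
      have h : n - (i + 1) < n := by omega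
      set k : Fin n := ⟨n - (i + 1), h⟩ with hk
      have hcast : (⟨n - (i + 1), by omega⟩ : Fin (n + 1)) = k.castSucc := rfl
      have hsuccv : (k.succ : Fin (n + 1)) = ⟨n - i, by omega⟩ := by
        apply Fin.ext
        show n - (i + 1) + 1 = n - i
        omega
      have hprev := ih (by omega)
      by_cases hkH : k ∈ H
      · have hkS : k ∉ S j := hdis k hkH
        simp only [Cpath, dif_pos h, if_pos (show (⟨n - (i + 1), h⟩ : Fin n) ∈ H from hkH)]
        refine ⟨Set.mem_univ _, HInd.bp j k, ?_, Set.mem_univ _, HInd.bn j k.succ, ?_, ?_⟩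
        · exact hit_role_s m n S
            (Or.inr (Or.inr ⟨j, k, hkS, Or.inl ⟨by rw [hcast], rfl⟩⟩))
        · exact hit_role_s m n S
            (Or.inr (Or.inr ⟨j, k, hkS, Or.inr ⟨rfl, rfl⟩⟩))
        · rw [hsuccv]; exact hprev
      · simp only [Cpath, dif_pos h, if_neg (show (⟨n - (i + 1), h⟩ : Fin n) ∉ H from hkH)]
        refine ⟨Set.mem_univ _, HInd.bn j k.succ, ?_, ?_⟩
        · exact hit_role_r m n S
            (Or.inr (Or.inr (Or.inr ⟨j, k, by rw [hcast], rfl⟩)))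
        · rw [hsuccv]; exact hprev

lemma hit_size_path (n : ℕ) (H : Finset (Fin n)) :
    ∀ i, i ≤ n →
      (Cpath n H i).size =
        1 + i + (H.filter (fun x : Fin n => n - i ≤ (x : ℕ))).card := by
  intro i
  induction i with
  | zero =>
      intro _
      have he : (H.filter (fun x : Fin n => n ≤ (x : ℕ))) = ∅ := by
        apply Finset.filter_false_of_mem
        intro x _
        have := x.isLt
        omega
      simp only [Cpath, PC.size, Nat.sub_zero, he, Finset.card_empty]
  | succ i ih =>
      intro hi
      have h : n - (i + 1) < n := by omega
      set k : Fin n := ⟨n - (i + 1), h⟩ with hk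
      have hprev := ih (by omega)
      by_cases hkH : k ∈ H
      · have hfe : H.filter (fun x : Fin n => n - (i + 1) ≤ (x : ℕ)) =
            insert k (H.filter (fun x : Fin n => n - i ≤ (x : ℕ))) := by
          ext x
          simp only [Finset.mem_filter, Finset.mem_insert]
          constructor
          · rintro ⟨hx, hle⟩
            rcases Nat.lt_or_ge (x : ℕ) (n - i) with h1 | h1
            · left; apply Fin.ext; simp [hk]; omega
            · right; exact ⟨hx, h1⟩
          · rintro (rfl | ⟨hx, hle⟩)
            · exact ⟨hkH, le_refl _⟩
            · exact ⟨hx, by omega⟩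
        have hnm : k ∉ H.filter (fun x : Fin n => n - i ≤ (x : ℕ)) := by
          simp only [Finset.mem_filter, hk, not_and]
          intro _
          simp
          omega
        simp only [Cpath, dif_pos h, if_pos (show (⟨n - (i + 1), h⟩ : Fin n) ∈ H from hkH), PC.size, hprev, hfe,
          Finset.card_insert_of_notMem hnm]
        omega
      · have hfe : H.filter (fun x : Fin n => n - (i + 1) ≤ (x : ℕ)) =
            H.filter (fun x : Fin n => n - i ≤ (x : ℕ)) := by
          ext x
          simp only [Finset.mem_filter]
          constructor
          · rintro ⟨hx, hle⟩
            refine ⟨hx, ?_⟩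
            rcases Nat.lt_or_ge (x : ℕ) (n - i) with h1 | h1
            · exfalso; apply hkH
              have hxk : x = k := by apply Fin.ext; simp [hk]; omega
              rwa [← hxk]
            · exact h1
          · rintro ⟨hx, hle⟩
            exact ⟨hx, by omega⟩
        simp only [Cpath, dif_pos h, if_neg (show (⟨n - (i + 1), h⟩ : Fin n) ∉ H from hkH), PC.size, hprev, hfe]
        omega


/-- Conversely, if the path concept `∃r.C_n` determined by `H` (whose `i`-th
block is `ss` iff `i ∈ H`) fits `{a}, {b}` in the reduction database, then `H`
is a hitting set for `S`, and the concept has size `n + |H| + 2`. -/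

theorem stmt14 (m n : ℕ) (S : Fin m → Finset (Fin n)) (H : Finset (Fin n))
    (hfit : HInd.rootA ∈ (PC.ex true (Cpath n H n)).sem (hitDB m n S) ∧
      HInd.rootB ∉ (PC.ex true (Cpath n H n)).sem (hitDB m n S)) :
    (∀ j : Fin m, ∃ x ∈ H, x ∈ S j) ∧
    (PC.ex true (Cpath n H n)).size = n + H.card + 2 := by
  constructor
  · intro j
    by_contra hcon
    push_neg at hcon
    apply hfit.2
    have hmem := hit_mem_path m n S H j hcon n (le_refl n)
    refine ⟨Set.mem_univ _, HInd.bn j ⟨n - n, by omega⟩, ?_, hmem⟩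
    refine hit_role_r m n S (Or.inr (Or.inl ⟨rfl, j, ?_⟩))
    congr 1
    apply Fin.ext
    simp
  · have hs := hit_size_path n H n (le_refl n)
    have hfe : H.filter (fun x : Fin n => n - n ≤ (x : ℕ)) = H := by
      apply Finset.filter_true_of_mem
      intro x _
      omega
    simp only [PC.size, hs, hfe]
    omega
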